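/- Let f : ℝ × Ω → ℝ be a stationary process with C¹ paths, let λ > m₀ := ess-inf of G, and suppose a(x,ω)∂_x f(x,ω) + G(f(x,ω),x,ω) < λ for all x, a.s. Assume G satisfies α(|p|) ≤ G(p,x,ω) ≤ β(|p|) with α coercive. Then almost surely f(x,ω) ∈ (p⁻_λ, p⁺_λ) for all x ∈ ℝ, where p⁻_λ := inf_x inf{p : G(p,x,ω) ≤ λ} and p⁺_λ := sup_x sup{p : G(p,x,ω) ≤ λ} (a.s. constants by ergodicity). -/

import Mathlib

open MeasureTheory

/-- Poincaré recurrence for a real observable: almost surely, the orbit returns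
within `ε` of the initial value. -/
lemma recur_aux {Ω : Type*} [MeasurableSpace Ω] (μ : Measure Ω)
    [IsProbabilityMeasure μ] (T : Ω → Ω)
    (hT : MeasurePreserving T μ μ) (h : Ω → ℝ) (hh : Measurable h) :
    ∀ᵐ ω ∂μ, ∀ ε : ℝ, 0 < ε → ∃ n : ℕ, 1 ≤ n ∧ |h (T^[n] ω) - h ω| < ε := by
  have hcons := hT.conservative
  have key : ∀ᵐ ω ∂μ, ∀ (k : ℕ) (j : ℤ),
      ω ∈ h ⁻¹' Set.Ico ((j : ℝ) * (1/(k+1))) (((j : ℝ)+1) * (1/(k+1))) →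
      ∃ᶠ n in Filter.atTop,
        T^[n] ω ∈ h ⁻¹' Set.Ico ((j : ℝ) * (1/(k+1))) (((j : ℝ)+1) * (1/(k+1))) := by
    rw [MeasureTheory.ae_all_iff]; intro k
    rw [MeasureTheory.ae_all_iff]; intro j
    exact hcons.ae_mem_imp_frequently_image_mem
      (hh measurableSet_Ico).nullMeasurableSet
  filter_upwards [key] with ω hω ε hε
  obtain ⟨k, hk⟩ := exists_nat_one_div_lt hε
  set δ : ℝ := 1 / ((k : ℝ) + 1) with hδdef
  have hδ : (0:ℝ) < δ := by positivity
  set j : ℤ := ⌊h ω / δ⌋ with hjdef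
  have hmem : h ω ∈ Set.Ico ((j : ℝ) * δ) (((j : ℝ)+1) * δ) := by
    constructor
    · have := Int.floor_le (h ω / δ)
      calc (j : ℝ) * δ ≤ (h ω / δ) * δ := by
            exact mul_le_mul_of_nonneg_right this hδ.le
        _ = h ω := by field_simp
    · have := Int.lt_floor_add_one (h ω / δ)
      have h2 : h ω / δ * δ < ((j : ℝ) + 1) * δ :=
        mul_lt_mul_of_pos_right this hδ
      calc h ω = h ω / δ * δ := by field_simp
        _ < ((j : ℝ) + 1) * δ := h2
  obtain ⟨n, hn1, hn2⟩ := Filter.frequently_atTop.mp (hω k j hmem) 1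
  refine ⟨n, hn1, ?_⟩
  have h1 := hn2.1
  have h2 := hn2.2
  have h3 := hmem.1
  have h4 := hmem.2
  have habs : |h (T^[n] ω) - h ω| < δ := by
    rw [abs_sub_lt_iff]
    constructor <;> nlinarith
  exact habs.trans hk

/-- If `g ≤ g z` on a left neighborhood interval `(A, z)`, then the derivative
at `z` is nonnegative. -/
lemma deriv_nonneg_left {g : ℝ → ℝ} {d z A : ℝ} (hd : HasDerivAt g d z) (hA : A < z)
    (hle : ∀ t ∈ Set.Ioo A z, g t ≤ g z) : 0 ≤ d := by
  have h1 : HasDerivWithinAt g d (Set.Iio z) z := hd.hasDerivWithinAt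
  have hz : z ∉ Set.Iio z := fun h => lt_irrefl z h
  rw [hasDerivWithinAt_iff_tendsto_slope' hz] at h1
  refine ge_of_tendsto h1 ?_
  filter_upwards [Ioo_mem_nhdsLT hA] with t ht
  rw [slope_def_field]
  have e : (g t - g z) / (t - z) = (g z - g t) / (z - t) := by
    rw [← neg_sub (g z) (g t), ← neg_sub z t, neg_div_neg_eq]
  rw [e]
  exact div_nonneg (sub_nonneg.2 (hle t ht)) (sub_nonneg.2 ht.2.le)

/-- If `g z ≤ g` on a right neighborhood interval `(z, B)`, then the derivative
at `z` is nonnegative. -/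
lemma deriv_nonneg_right {g : ℝ → ℝ} {d z B : ℝ} (hd : HasDerivAt g d z) (hB : z < B)
    (hle : ∀ t ∈ Set.Ioo z B, g z ≤ g t) : 0 ≤ d := by
  have h1 : HasDerivWithinAt g d (Set.Ioi z) z := hd.hasDerivWithinAt
  have hz : z ∉ Set.Ioi z := fun h => lt_irrefl z h
  rw [hasDerivWithinAt_iff_tendsto_slope' hz] at h1
  refine ge_of_tendsto h1 ?_
  filter_upwards [Ioo_mem_nhdsGT hB] with t ht
  rw [slope_def_field]
  exact div_nonneg (sub_nonneg.2 (hle t ht)) (sub_nonneg.2 ht.1.le)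

/-- If the derivative at `x` is negative, there are points just to the left with
larger values. -/
lemma exists_left_gt {g : ℝ → ℝ} {d x : ℝ} (hd : HasDerivAt g d x) (hneg : d < 0) :
    ∃ q : ℚ, (q : ℝ) ∈ Set.Ioo (x - 1) x ∧ g x < g q := by
  have h1 : HasDerivWithinAt g d (Set.Iio x) x := hd.hasDerivWithinAt
  have hz : x ∉ Set.Iio x := fun h => lt_irrefl x h
  rw [hasDerivWithinAt_iff_tendsto_slope' hz] at h1
  have hev : ∀ᶠ t in nhdsWithin x (Set.Iio x), slope g x t < 0 :=
    h1.eventually_lt_const hneg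
  have hev2 : ∀ᶠ t in nhdsWithin x (Set.Iio x), g x < g t := by
    filter_upwards [hev, self_mem_nhdsWithin] with t ht ht2
    rw [slope_def_field] at ht
    rcases div_neg_iff.mp ht with ⟨hp, hn⟩ | ⟨hn, hp⟩
    · linarith [Set.mem_Iio.mp ht2]
    · linarith [Set.mem_Iio.mp ht2]
  obtain ⟨l, hl, hsub⟩ := mem_nhdsLT_iff_exists_Ioo_subset.mp hev2
  have hmaxlt : max l (x - 1) < x := max_lt hl (by linarith)
  obtain ⟨q, hq1, hq2⟩ := exists_rat_btwn hmaxlt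
  have hql : l < (q : ℝ) := lt_of_le_of_lt (le_max_left _ _) hq1
  have hqx1 : x - 1 < (q : ℝ) := lt_of_le_of_lt (le_max_right _ _) hq1
  exact ⟨q, ⟨hqx1, hq2⟩, hsub ⟨hql, hq2⟩⟩

/-- If the derivative at `x` is negative, there are points just to the right with
smaller values. -/
lemma exists_right_lt {g : ℝ → ℝ} {d x : ℝ} (hd : HasDerivAt g d x) (hneg : d < 0) :
    ∃ q : ℚ, (q : ℝ) ∈ Set.Ioo x (x + 1) ∧ g q < g x := by
  have h1 : HasDerivWithinAt g d (Set.Ioi x) x := hd.hasDerivWithinAt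
  have hz : x ∉ Set.Ioi x := fun h => lt_irrefl x h
  rw [hasDerivWithinAt_iff_tendsto_slope' hz] at h1
  have hev : ∀ᶠ t in nhdsWithin x (Set.Ioi x), slope g x t < 0 :=
    h1.eventually_lt_const hneg
  have hev2 : ∀ᶠ t in nhdsWithin x (Set.Ioi x), g t < g x := by
    filter_upwards [hev, self_mem_nhdsWithin] with t ht ht2
    rw [slope_def_field] at ht
    rcases div_neg_iff.mp ht with ⟨hp, hn⟩ | ⟨hn, hp⟩
    · linarith [Set.mem_Ioi.mp ht2]
    · linarith [Set.mem_Ioi.mp ht2]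
  obtain ⟨u, hu, hsub⟩ := mem_nhdsGT_iff_exists_Ioo_subset.mp hev2
  have hminlt : x < min u (x + 1) := lt_min hu (by linarith)
  obtain ⟨q, hq1, hq2⟩ := exists_rat_btwn hminlt
  have hqu : (q : ℝ) < u := lt_of_lt_of_le hq2 (min_le_left _ _)
  have hqx1 : (q : ℝ) < x + 1 := lt_of_lt_of_le hq2 (min_le_right _ _)
  exact ⟨q, ⟨hq1, hqx1⟩, hsub ⟨hq1, hqu⟩⟩

/-- Bounds for stationary strict subsolutions: in an ergodic stationary setting,
if `f` is stationary with `C¹` paths and satisfies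
`a(x,ω) f' + G(f, x, ω) < λ` for all `x`, a.s., with `λ > m₀` and `G` coercive
(`α(|p|) ≤ G(p,x,ω) ≤ β(|p|)` with `α` coercive), then almost surely
`f(x,ω) ∈ (p⁻_λ, p⁺_λ)` for all `x`, where
`p⁻_λ = inf_x inf {p : G(p,x,ω) ≤ λ}` and `p⁺_λ = sup_x sup {p : G(p,x,ω) ≤ λ}`. -/
theorem stationary_subsolution_bounds
    {Ω : Type*} [MeasurableSpace Ω] (μ : Measure Ω) [IsProbabilityMeasure μ]
    (τ : ℝ → Ω → Ω)
    (hmp : ∀ x : ℝ, MeasurePreserving (τ x) μ μ)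
    (hτ0 : ∀ ω, τ 0 ω = ω)
    (hτadd : ∀ x y : ℝ, ∀ ω, τ (x + y) ω = τ x (τ y ω))
    (hτmeas : Measurable fun p : ℝ × Ω => τ p.1 p.2)
    (herg : ∀ φ : Ω → ℝ, Measurable φ →
      (∀ x : ℝ, ∀ᵐ ω ∂μ, φ (τ x ω) = φ ω) → ∃ c : ℝ, ∀ᵐ ω ∂μ, φ ω = c)
    (a : ℝ → Ω → ℝ) (G : ℝ → ℝ → Ω → ℝ) (f : ℝ → Ω → ℝ)
    (m₀ lam : ℝ) (α β : ℝ → ℝ)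
    (ha01 : ∀ x ω, 0 ≤ a x ω ∧ a x ω ≤ 1)
    (ha_stat : ∀ x y : ℝ, ∀ ω, a (x + y) ω = a x (τ y ω))
    (hG_stat : ∀ p x y : ℝ, ∀ ω, G p (x + y) ω = G p x (τ y ω))
    (hG_cont : ∀ ω, Continuous fun q : ℝ × ℝ => G q.1 q.2 ω)
    (hG_lb : ∀ p x ω, m₀ ≤ G p x ω)
    (hα_coercive : Filter.Tendsto α Filter.atTop Filter.atTop)
    (hβ_coercive : Filter.Tendsto β Filter.atTop Filter.atTop)
    (hG_bounds : ∀ p x ω, α |p| ≤ G p x ω ∧ G p x ω ≤ β |p|)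
    (hlam : m₀ < lam)
    (hf_meas : Measurable fun q : ℝ × Ω => f q.1 q.2)
    (hf_stat : ∀ x y : ℝ, ∀ ω, f (x + y) ω = f x (τ y ω))
    (hf_C1 : ∀ ω, ContDiff ℝ 1 (fun x => f x ω))
    (hf_sub : ∀ᵐ ω ∂μ, ∀ x : ℝ,
      a x ω * deriv (fun y => f y ω) x + G (f x ω) x ω < lam) :
    ∀ᵐ ω ∂μ, ∀ x : ℝ,
      (⨅ y : ℝ, sInf {p : ℝ | G p y ω ≤ lam}) < f x ω ∧
        f x ω < ⨆ y : ℝ, sSup {p : ℝ | G p y ω ≤ lam} := by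
  -- a bound R such that all sublevel sets are inside [-R, R]
  obtain ⟨R₀, hR₀⟩ := Filter.eventually_atTop.mp
    (hα_coercive.eventually_ge_atTop (lam + 1))
  set R : ℝ := max R₀ 0 with hRdef
  have hR0 : (0:ℝ) ≤ R := le_max_right _ _
  have hS_sub : ∀ ω y, {p : ℝ | G p y ω ≤ lam} ⊆ Set.Icc (-R) R := by
    intro ω y p hp
    rw [Set.mem_Icc, ← abs_le]
    by_contra hab
    push_neg at hab
    have h1 := hR₀ |p| (le_of_lt (lt_of_le_of_lt (le_max_left _ _) hab))
    have h2 := (hG_bounds p y ω).1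
    have h3 : G p y ω ≤ lam := hp
    linarith
  have hBddA : ∀ ω, BddAbove (Set.range fun y => sSup {p : ℝ | G p y ω ≤ lam}) := by
    intro ω
    refine ⟨R, ?_⟩
    rintro _ ⟨y, rfl⟩
    show sSup {p : ℝ | G p y ω ≤ lam} ≤ R
    rcases Set.eq_empty_or_nonempty {p : ℝ | G p y ω ≤ lam} with he | hne
    · rw [he, Real.sSup_empty]; exact hR0
    · exact csSup_le hne fun p hp => (hS_sub ω y hp).2
  have hBddB : ∀ ω, BddBelow (Set.range fun y => sInf {p : ℝ | G p y ω ≤ lam}) := by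
    intro ω
    refine ⟨-R, ?_⟩
    rintro _ ⟨y, rfl⟩
    show -R ≤ sInf {p : ℝ | G p y ω ≤ lam}
    rcases Set.eq_empty_or_nonempty {p : ℝ | G p y ω ≤ lam} with he | hne
    · rw [he, Real.sInf_empty]; linarith
    · exact le_csInf hne fun p hp => (hS_sub ω y hp).1
  -- iteration identities
  have iter_pos : ∀ (n : ℕ) (ω : Ω), (τ 1)^[n] ω = τ (n : ℝ) ω := by
    intro n
    induction n with
    | zero => intro ω; simp [hτ0]
    | succ n ih =>
      intro ω
      rw [Function.iterate_succ_apply', ih]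
      have h := hτadd 1 (n : ℝ) ω
      rw [← h]
      congr 1
      push_cast
      ring
  have iter_neg : ∀ (n : ℕ) (ω : Ω), (τ (-1))^[n] ω = τ (-(n : ℝ)) ω := by
    intro n
    induction n with
    | zero => intro ω; simp [hτ0]
    | succ n ih =>
      intro ω
      rw [Function.iterate_succ_apply', ih]
      have h := hτadd (-1) (-(n : ℝ)) ω
      rw [← h]
      congr 1
      push_cast
      ring
  -- measurability of slices
  have hmeas_q : ∀ q : ℝ, Measurable fun ω => f q ω := by
    intro q
    exact hf_meas.comp (measurable_const.prodMk measurable_id)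
  -- forward recurrence at all rational base points
  have hfor : ∀ᵐ ω ∂μ, ∀ q : ℚ, ∀ ε : ℝ, 0 < ε →
      ∃ n : ℕ, 1 ≤ n ∧ |f ((q : ℝ) + n) ω - f q ω| < ε := by
    rw [MeasureTheory.ae_all_iff]
    intro q
    filter_upwards [recur_aux μ (τ 1) (hmp 1) (fun ω => f (q : ℝ) ω) (hmeas_q q)]
      with ω hω ε hε
    obtain ⟨n, hn1, hn2⟩ := hω ε hε
    refine ⟨n, hn1, ?_⟩
    rw [iter_pos n ω] at hn2
    rwa [hf_stat (q : ℝ) (n : ℝ) ω]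
  -- backward recurrence at all rational base points
  have hbak : ∀ᵐ ω ∂μ, ∀ q : ℚ, ∀ ε : ℝ, 0 < ε →
      ∃ n : ℕ, 1 ≤ n ∧ |f ((q : ℝ) - n) ω - f q ω| < ε := by
    rw [MeasureTheory.ae_all_iff]
    intro q
    filter_upwards [recur_aux μ (τ (-1)) (hmp (-1)) (fun ω => f (q : ℝ) ω) (hmeas_q q)]
      with ω hω ε hε
    obtain ⟨n, hn1, hn2⟩ := hω ε hε
    refine ⟨n, hn1, ?_⟩
    rw [iter_neg n ω] at hn2
    have he : (q : ℝ) - n = (q : ℝ) + (-(n : ℝ)) := by ring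
    rw [he, hf_stat (q : ℝ) (-(n : ℝ)) ω]
    exact hn2
  filter_upwards [hf_sub, hfor, hbak] with ω hsub hfo hba
  intro x
  have hg : ContDiff ℝ 1 fun y => f y ω := hf_C1 ω
  have hgd : ∀ t : ℝ, HasDerivAt (fun y => f y ω) (deriv (fun y => f y ω) t) t :=
    fun t => ((hg.differentiable one_ne_zero) t).hasDerivAt
  have hgc : Continuous fun y => f y ω := hg.continuous
  -- upper claim: a point z with f x ω ≤ f z ω and nonneg derivative
  have claim_up : ∃ z : ℝ, f x ω ≤ f z ω ∧ 0 ≤ deriv (fun y => f y ω) z := by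
    by_cases hdx : 0 ≤ deriv (fun y => f y ω) x
    · exact ⟨x, le_rfl, hdx⟩
    · push_neg at hdx
      obtain ⟨q, hqmem, hqgt⟩ := exists_left_gt (hgd x) hdx
      obtain ⟨n, hn1, hn2⟩ := hfo q (f q ω - f x ω) (by linarith)
      have hgt : f x ω < f ((q : ℝ) + n) ω := by
        rw [abs_sub_lt_iff] at hn2
        linarith [hn2.2]
      have hxlt : x < (q : ℝ) + n := by
        have : (1 : ℝ) ≤ (n : ℝ) := by exact_mod_cast hn1
        have := hqmem.1
        linarith
      obtain ⟨z, hzmem, hzmax⟩ := isCompact_Icc.exists_isMaxOn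
        (Set.nonempty_Icc.2 hxlt.le) (hgc.continuousOn (s := Set.Icc x ((q : ℝ) + n)))
      have hzval : f ((q : ℝ) + n) ω ≤ f z ω :=
        hzmax (Set.mem_Icc.2 ⟨hxlt.le, le_rfl⟩)
      have hxz : x < z := by
        rcases lt_or_eq_of_le hzmem.1 with h | h
        · exact h
        · exfalso; rw [← h] at hzval; linarith
      refine ⟨z, by linarith, ?_⟩
      refine deriv_nonneg_left (hgd z) hxz ?_
      intro t ht
      exact hzmax (Set.mem_Icc.2 ⟨ht.1.le, ht.2.le.trans hzmem.2⟩)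
  -- lower claim: a point z with f z ω ≤ f x ω and nonneg derivative
  have claim_lo : ∃ z : ℝ, f z ω ≤ f x ω ∧ 0 ≤ deriv (fun y => f y ω) z := by
    by_cases hdx : 0 ≤ deriv (fun y => f y ω) x
    · exact ⟨x, le_rfl, hdx⟩
    · push_neg at hdx
      obtain ⟨q, hqmem, hqlt⟩ := exists_right_lt (hgd x) hdx
      obtain ⟨n, hn1, hn2⟩ := hba q (f x ω - f q ω) (by linarith)
      have hlt : f ((q : ℝ) - n) ω < f x ω := by
        rw [abs_sub_lt_iff] at hn2
        linarith [hn2.1]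
      have hltx : (q : ℝ) - n < x := by
        have : (1 : ℝ) ≤ (n : ℝ) := by exact_mod_cast hn1
        have := hqmem.2
        linarith
      obtain ⟨z, hzmem, hzmin⟩ := isCompact_Icc.exists_isMinOn
        (Set.nonempty_Icc.2 hltx.le) (hgc.continuousOn (s := Set.Icc ((q : ℝ) - n) x))
      have hzval : f z ω ≤ f ((q : ℝ) - n) ω :=
        hzmin (Set.mem_Icc.2 ⟨le_rfl, hltx.le⟩)
      have hzx : z < x := by
        rcases lt_or_eq_of_le hzmem.2 with h | h
        · exact h
        · exfalso; rw [h] at hzval; linarith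
      refine ⟨z, by linarith, ?_⟩
      refine deriv_nonneg_right (hgd z) hzx ?_
      intro t ht
      exact hzmin (Set.mem_Icc.2 ⟨hzmem.1.trans ht.1.le, ht.2.le⟩)
  constructor
  · -- lower bound
    obtain ⟨z, hz1, hz2⟩ := claim_lo
    have hGz : G (f z ω) z ω < lam := by
      have h1 := hsub z
      have h2 : 0 ≤ a z ω * deriv (fun y => f y ω) z :=
        mul_nonneg (ha01 z ω).1 hz2
      linarith
    have hcont : Continuous fun p : ℝ => G p z ω :=
      (hG_cont ω).comp (continuous_id.prodMk continuous_const)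
    have hU : IsOpen {p : ℝ | G p z ω < lam} :=
      isOpen_lt hcont continuous_const
    obtain ⟨δ, hδpos, hball⟩ := Metric.isOpen_iff.mp hU (f z ω) hGz
    have hpmem : (f z ω - δ/2) ∈ {p : ℝ | G p z ω ≤ lam} := by
      have : (f z ω - δ/2) ∈ Metric.ball (f z ω) δ := by
        rw [Metric.mem_ball, Real.dist_eq]
        rw [abs_sub_comm]
        rw [abs_of_nonneg (by linarith)]
        linarith
      have h5 : G (f z ω - δ/2) z ω < lam := hball this
      exact le_of_lt h5
    have hbddS : BddBelow {p : ℝ | G p z ω ≤ lam} :=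
      ⟨-R, fun p hp => (hS_sub ω z hp).1⟩
    have h1 : sInf {p : ℝ | G p z ω ≤ lam} ≤ f z ω - δ/2 :=
      csInf_le hbddS hpmem
    have h2 : (⨅ y : ℝ, sInf {p : ℝ | G p y ω ≤ lam}) ≤
        sInf {p : ℝ | G p z ω ≤ lam} := ciInf_le (hBddB ω) z
    linarith
  · -- upper bound
    obtain ⟨z, hz1, hz2⟩ := claim_up
    have hGz : G (f z ω) z ω < lam := by
      have h1 := hsub z
      have h2 : 0 ≤ a z ω * deriv (fun y => f y ω) z :=
        mul_nonneg (ha01 z ω).1 hz2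
      linarith
    have hcont : Continuous fun p : ℝ => G p z ω :=
      (hG_cont ω).comp (continuous_id.prodMk continuous_const)
    have hU : IsOpen {p : ℝ | G p z ω < lam} :=
      isOpen_lt hcont continuous_const
    obtain ⟨δ, hδpos, hball⟩ := Metric.isOpen_iff.mp hU (f z ω) hGz
    have hpmem : (f z ω + δ/2) ∈ {p : ℝ | G p z ω ≤ lam} := by
      have : (f z ω + δ/2) ∈ Metric.ball (f z ω) δ := by
        rw [Metric.mem_ball, Real.dist_eq]
        rw [abs_of_nonneg (by linarith)]
        linarith
      have h5 : G (f z ω + δ/2) z ω < lam := hball this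
      exact le_of_lt h5
    have hbddS : BddAbove {p : ℝ | G p z ω ≤ lam} :=
      ⟨R, fun p hp => (hS_sub ω z hp).2⟩
    have h1 : f z ω + δ/2 ≤ sSup {p : ℝ | G p z ω ≤ lam} :=
      le_csSup hbddS hpmem
    have h2 : sSup {p : ℝ | G p z ω ≤ lam} ≤
        ⨆ y : ℝ, sSup {p : ℝ | G p y ω ≤ lam} := le_ciSup (hBddA ω) z
    linarith
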